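/- With the roots $\alpha_1,\dots,\alpha_{2N}$ as above (i.e. $\alpha_l=\varepsilon_l-\varepsilon_{l+1}$ for $1\le l\le 2N-1$ and $\alpha_{2N}=\sum_{k=1}^{2N}\varepsilon_k$), the $2N\times 2N$ matrix $A$ with entries $a_{ij}=(\alpha_i,\alpha_j)$ for $i,j=1,\dots,2N$ is invertible. -/

import Mathlib

open Finset Matrix

private lemma two_point_sum {n : ℕ} (a b : Fin n) (hab : a ≠ b) (x y : ℚ) (f : Fin n → ℚ) :
    (∑ k : Fin n, (if k = a then x else if k = b then y else 0) * f k) = x * f a + y * f b := by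
  have h : ∀ k : Fin n, (if k = a then x else if k = b then y else 0) * f k
      = (if k = a then x * f k else 0) + (if k = b then y * f k else 0) := by
    intro k
    by_cases h1 : k = a
    · subst h1; simp [hab]
    · by_cases h2 : k = b
      · subst h2; simp [h1]
      · simp [h1, h2]
  rw [Finset.sum_congr rfl fun k _ => h k, Finset.sum_add_distrib,
    Finset.sum_ite_eq' Finset.univ a, Finset.sum_ite_eq' Finset.univ b]
  simp

private lemma two_point_sum' {n : ℕ} (i : Fin n) (hb : (i:ℕ)+1 < n) (x y : ℚ) (f : Fin n → ℚ) :
    (∑ k : Fin n, (if k = i then x else if (k:ℕ) = (i:ℕ) + 1 then y else 0) * f k)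
      = x * f i + y * f ⟨(i:ℕ)+1, hb⟩ := by
  have h1 : ∀ k : Fin n, ((k:ℕ) = (i:ℕ)+1) = (k = ⟨(i:ℕ)+1, hb⟩) := fun k =>
    propext (by simp [Fin.ext_iff])
  simp only [h1]
  exact two_point_sum i ⟨(i:ℕ)+1, hb⟩ (by simp [Fin.ext_iff]) x y f

private lemma ind_sum {n m : ℕ} (h : m < n) :
    (∑ k : Fin n, (if (k : ℕ) ≤ m then (1:ℚ) else 0)) = (m + 1 : ℕ) := by
  rw [Fin.sum_univ_eq_sum_range (fun k => if k ≤ m then (1:ℚ) else 0) n]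
  rw [Finset.range_eq_Ico, ← Finset.sum_Ico_consecutive _ (Nat.zero_le (m+1)) h]
  have h1 : ∑ k ∈ Finset.Ico 0 (m+1), (if k ≤ m then (1:ℚ) else 0) = (m+1 : ℕ) := by
    rw [Finset.sum_congr rfl (fun k hk => if_pos (by simp at hk; omega))]
    simp
  have h2 : ∑ k ∈ Finset.Ico (m+1) n, (if k ≤ m then (1:ℚ) else 0) = 0 :=
    Finset.sum_eq_zero fun k hk => if_neg (by simp at hk; omega)
  rw [h1, h2, add_zero]

private lemma alt_range (N : ℕ) : ∑ k ∈ Finset.range (2*N), ((-1:ℚ))^k = 0 := by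
  induction N with
  | zero => simp
  | succ n ih =>
    have h : 2*(n+1) = 2*n+1+1 := by ring
    rw [h, Finset.sum_range_succ, Finset.sum_range_succ, ih, pow_succ]
    ring

private lemma alt_fin (N : ℕ) : ∑ k : Fin (2*N), ((-1:ℚ))^(k:ℕ) = 0 := by
  rw [Fin.sum_univ_eq_sum_range]; exact alt_range N

private lemma alt_icc (N : ℕ) : ∑ k ∈ Finset.Icc 1 (2*N), ((-1:ℚ))^(k+1) = 0 := by
  have hicc : Finset.Icc 1 (2*N) = Finset.Ico 1 (2*N+1) := by
    rw [Finset.Ico_add_one_right_eq_Icc]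
  rw [hicc, Finset.sum_Ico_eq_sum_range]
  have h : 2*N + 1 - 1 = 2*N := by omega
  rw [h]
  have h2 : ∀ k, ((-1:ℚ))^(1 + k + 1) = (-1)^k := by
    intro k
    have h3 : 1 + k + 1 = k + 2 := by ring
    rw [h3, pow_succ, pow_succ]; ring
  rw [Finset.sum_congr rfl fun k _ => h2 k]
  exact alt_range N

/-- the base change matrix: rows are `e_l - e_{l+1}` for `l < 2N-1`, last row all ones. -/
private def Pm (N : ℕ) : Matrix (Fin (2*N)) (Fin (2*N)) ℚ :=
  Matrix.of fun i k =>
    if (i:ℕ) = 2*N - 1 then 1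
    else if k = i then 1 else if (k:ℕ) = (i:ℕ) + 1 then -1 else 0

/-- explicit inverse of `Pm`. -/
private def Qm (N : ℕ) : Matrix (Fin (2*N)) (Fin (2*N)) ℚ :=
  Matrix.of fun k j =>
    if (j:ℕ) = 2*N - 1 then 1 / ((2*N : ℕ) : ℚ)
    else (if (k:ℕ) ≤ (j:ℕ) then 1 else 0) - (((j:ℕ) : ℚ) + 1) / ((2*N : ℕ) : ℚ)

private lemma Pm_last {N : ℕ} (i k : Fin (2*N)) (hi : (i:ℕ) = 2*N-1) : Pm N i k = 1 := by
  simp [Pm, hi]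

private lemma Pm_row {N : ℕ} (i k : Fin (2*N)) (hi : (i:ℕ) ≠ 2*N-1) :
    Pm N i k = if k = i then 1 else if (k:ℕ) = (i:ℕ) + 1 then -1 else 0 := by
  simp [Pm, hi]

private lemma row_sum {N : ℕ} (i : Fin (2*N)) (hi : (i:ℕ) ≠ 2*N-1) (f : Fin (2*N) → ℚ)
    (hb : (i:ℕ)+1 < 2*N) :
    ∑ k, Pm N i k * f k = f i - f ⟨(i:ℕ)+1, hb⟩ := by
  rw [Finset.sum_congr rfl fun k _ => by rw [Pm_row i k hi]]
  rw [two_point_sum' i hb 1 (-1) f]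
  ring

private lemma hPQ (N : ℕ) (hN : 1 ≤ N) : Pm N * Qm N = 1 := by
  have hn0 : ((2*N : ℕ) : ℚ) ≠ 0 := by
    simp; omega
  ext i j
  rw [Matrix.mul_apply, Matrix.one_apply]
  by_cases hi : (i:ℕ) = 2*N-1
  · rw [Finset.sum_congr rfl fun k _ => by rw [Pm_last i k hi, one_mul]]
    by_cases hj : (j:ℕ) = 2*N-1
    · have hij : i = j := Fin.ext (by omega)
      rw [Finset.sum_congr rfl (fun k _ => show Qm N k j = 1 / ((2*N:ℕ):ℚ) by simp [Qm, hj])]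
      rw [Finset.sum_const, Finset.card_univ, Fintype.card_fin, if_pos hij, nsmul_eq_mul,
        mul_one_div, div_self hn0]
    · have hij : ¬ i = j := fun h => hj (by rw [← h]; exact hi)
      rw [if_neg hij]
      rw [Finset.sum_congr rfl (fun k _ => show Qm N k j
        = (if (k:ℕ) ≤ (j:ℕ) then 1 else 0) - (((j:ℕ):ℚ)+1) / ((2*N:ℕ):ℚ) by simp [Qm, hj])]
      rw [Finset.sum_sub_distrib, ind_sum j.isLt, Finset.sum_const, Finset.card_univ,
        Fintype.card_fin, nsmul_eq_mul]
      push_cast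
      field_simp
      ring
  · have hb : (i:ℕ)+1 < 2*N := by have := i.isLt; omega
    rw [row_sum i hi (fun k => Qm N k j) hb]
    by_cases hj : (j:ℕ) = 2*N-1
    · have hij : ¬ i = j := fun h => hi (by rw [h]; exact hj)
      rw [if_neg hij]
      simp [Qm, hj]
    · simp only [Qm, Matrix.of_apply, hj, if_false]
      by_cases h1 : (i:ℕ) = (j:ℕ)
      · rw [if_pos (Fin.ext h1)]
        rw [if_pos (by omega : (i:ℕ) ≤ (j:ℕ)), if_neg (by simp; omega : ¬ ((⟨(i:ℕ)+1, hb⟩ : Fin (2*N)):ℕ) ≤ (j:ℕ))]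
        ring
      · rw [if_neg (fun h => h1 (congrArg Fin.val h))]
        by_cases h2 : (i:ℕ) ≤ (j:ℕ)
        · rw [if_pos h2, if_pos (by simp; omega : ((⟨(i:ℕ)+1, hb⟩ : Fin (2*N)):ℕ) ≤ (j:ℕ))]
          ring
        · rw [if_neg h2, if_neg (by simp; omega : ¬ ((⟨(i:ℕ)+1, hb⟩ : Fin (2*N)):ℕ) ≤ (j:ℕ))]
          ring

/-- the enlarged Cartan matrix `a_{ij} = (α_i, α_j)`, `i,j = 1,…,2N`,
of `U_q[gl(N|N)^]` is invertible. -/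
theorem cartan_matrix_invertible (N : ℕ) (hN : 1 ≤ N) (V : Type*) [AddCommGroup V] [Module ℚ V]
    (B : V →ₗ[ℚ] V →ₗ[ℚ] ℚ) (ε : ℕ → V)
    (hε : ∀ k, 1 ≤ k → k ≤ 2 * N → ∀ k', 1 ≤ k' → k' ≤ 2 * N →
      B (ε k) (ε k') = if k = k' then ((-1 : ℚ)) ^ (k + 1) else 0)
    (α : ℕ → V)
    (hαl : ∀ l, 1 ≤ l → l ≤ 2 * N - 1 → α l = ε l - ε (l + 1))
    (hα2N : α (2 * N) = ∑ k ∈ Finset.Icc 1 (2 * N), ε k) :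
    (Matrix.of fun i j : Fin (2 * N) => B (α (i.val + 1)) (α (j.val + 1))).det ≠ 0 := by
  have T : ∀ a c : ℕ, 1 ≤ a → a ≤ 2*N → 1 ≤ c → c ≤ 2*N → a = c →
      B (ε a) (ε c) = (-1)^(a+1) := fun a c h1 h2 h3 h4 h5 => by
    rw [hε a h1 h2 c h3 h4, if_pos h5]
  have F : ∀ a c : ℕ, 1 ≤ a → a ≤ 2*N → 1 ≤ c → c ≤ 2*N → ¬ a = c →
      B (ε a) (ε c) = 0 := fun a c h1 h2 h3 h4 h5 => by
    rw [hε a h1 h2 c h3 h4, if_neg h5]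
  have keyR : ∀ a, 1 ≤ a → a ≤ 2*N →
      B (ε a) (∑ k ∈ Finset.Icc 1 (2*N), ε k) = (-1)^(a+1) := by
    intro a h1 h2
    rw [map_sum]
    rw [Finset.sum_congr rfl (fun k hk => by
      rw [hε a h1 h2 k (Finset.mem_Icc.mp hk).1 (Finset.mem_Icc.mp hk).2])]
    rw [Finset.sum_ite_eq (Finset.Icc 1 (2*N)) a (fun _ => ((-1:ℚ))^(a+1))]
    rw [if_pos (Finset.mem_Icc.mpr ⟨h1, h2⟩)]
  have keyL : ∀ c, 1 ≤ c → c ≤ 2*N →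
      B (∑ k ∈ Finset.Icc 1 (2*N), ε k) (ε c) = (-1)^(c+1) := by
    intro c h1 h2
    rw [map_sum, LinearMap.sum_apply]
    rw [Finset.sum_congr rfl (fun k hk => by
      rw [hε k (Finset.mem_Icc.mp hk).1 (Finset.mem_Icc.mp hk).2 c h1 h2])]
    rw [Finset.sum_ite_eq' (Finset.Icc 1 (2*N)) c (fun k => ((-1:ℚ))^(k+1))]
    rw [if_pos (Finset.mem_Icc.mpr ⟨h1, h2⟩)]
  have keyB : B (∑ k ∈ Finset.Icc 1 (2*N), ε k) (∑ k ∈ Finset.Icc 1 (2*N), ε k) = 0 := by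
    rw [map_sum (B (∑ k ∈ Finset.Icc 1 (2*N), ε k)) (fun k => ε k) (Finset.Icc 1 (2*N))]
    rw [Finset.sum_congr rfl
      (fun k hk => keyL k (Finset.mem_Icc.mp hk).1 (Finset.mem_Icc.mp hk).2)]
    exact alt_icc N
  have hM : (Matrix.of fun i j : Fin (2*N) => B (α (i.val + 1)) (α (j.val + 1)))
      = Pm N * Matrix.diagonal (fun k : Fin (2*N) => ((-1:ℚ))^(k:ℕ)) * (Pm N)ᵀ := by
    ext i j
    rw [Matrix.mul_apply]
    simp only [Matrix.mul_diagonal, Matrix.transpose_apply, Matrix.of_apply]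
    by_cases hi : (i:ℕ) = 2*N-1
    · have hi1 : (i:ℕ) + 1 = 2*N := by have := i.isLt; omega
      rw [hi1, hα2N]
      rw [Finset.sum_congr rfl (fun (k : Fin (2*N)) _ => by rw [Pm_last i k hi, one_mul])]
      by_cases hj : (j:ℕ) = 2*N-1
      · have hj1 : (j:ℕ) + 1 = 2*N := by have := j.isLt; omega
        rw [hj1, hα2N, keyB]
        rw [Finset.sum_congr rfl (fun (k : Fin (2*N)) _ => by rw [Pm_last j k hj, mul_one])]
        exact (alt_fin N).symm
      · have hjb : (j:ℕ)+1 < 2*N := by have := j.isLt; omega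
        rw [hαl ((j:ℕ)+1) (by omega) (by omega)]
        simp only [map_sub, LinearMap.sub_apply]
        rw [keyL _ (by omega) (by omega), keyL _ (by omega) (by omega)]
        rw [Finset.sum_congr rfl (fun (k : Fin (2*N)) _ => (mul_comm (((-1:ℚ))^(k:ℕ)) (Pm N j k)))]
        rw [row_sum j hj (fun k => ((-1:ℚ))^(k:ℕ)) hjb]
        simp only [pow_succ]
        ring
    · have hib : (i:ℕ)+1 < 2*N := by have := i.isLt; omega
      rw [hαl ((i:ℕ)+1) (by omega) (by omega)]
      rw [Finset.sum_congr rfl (fun (k : Fin (2*N)) _ =>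
        mul_assoc (Pm N i k) (((-1:ℚ))^(k:ℕ)) ((Pm N) j k))]
      rw [row_sum i hi (fun k => ((-1:ℚ))^(k:ℕ) * Pm N j k) hib]
      simp only [Fin.val_mk]
      by_cases hj : (j:ℕ) = 2*N-1
      · have hj1 : (j:ℕ) + 1 = 2*N := by have := j.isLt; omega
        rw [hj1, hα2N]
        simp only [map_sub, LinearMap.sub_apply]
        rw [keyR _ (by omega) (by omega), keyR _ (by omega) (by omega)]
        rw [Pm_last j i hj, Pm_last j ⟨(i:ℕ)+1, hib⟩ hj]
        simp only [pow_succ]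
        ring
      · have hjb : (j:ℕ)+1 < 2*N := by have := j.isLt; omega
        rw [hαl ((j:ℕ)+1) (by omega) (by omega)]
        simp only [map_sub, LinearMap.sub_apply]
        by_cases e1 : (i:ℕ) = (j:ℕ)
        · rw [T ((i:ℕ)+1) ((j:ℕ)+1) (by omega) (by omega) (by omega) (by omega) (by omega),
            F ((i:ℕ)+1) ((j:ℕ)+1+1) (by omega) (by omega) (by omega) (by omega) (by omega),
            F ((i:ℕ)+1+1) ((j:ℕ)+1) (by omega) (by omega) (by omega) (by omega) (by omega),
            T ((i:ℕ)+1+1) ((j:ℕ)+1+1) (by omega) (by omega) (by omega) (by omega) (by omega)]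
          have pj1 : Pm N j i = 1 := by
            rw [Pm_row j i hj, if_pos (Fin.ext e1)]
          have pj2 : Pm N j ⟨(i:ℕ)+1, hib⟩ = -1 := by
            rw [Pm_row j _ hj, if_neg (by simp only [Fin.ext_iff, Fin.val_mk]; omega),
              if_pos (by simp only [Fin.val_mk]; omega)]
          rw [pj1, pj2]
          simp only [pow_succ]
          ring
        · by_cases e2 : (j:ℕ) = (i:ℕ)+1
          · rw [F ((i:ℕ)+1) ((j:ℕ)+1) (by omega) (by omega) (by omega) (by omega) (by omega),
              F ((i:ℕ)+1) ((j:ℕ)+1+1) (by omega) (by omega) (by omega) (by omega) (by omega),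
              T ((i:ℕ)+1+1) ((j:ℕ)+1) (by omega) (by omega) (by omega) (by omega) (by omega),
              F ((i:ℕ)+1+1) ((j:ℕ)+1+1) (by omega) (by omega) (by omega) (by omega) (by omega)]
            have pj1 : Pm N j i = 0 := by
              rw [Pm_row j i hj, if_neg (by simp only [Fin.ext_iff, Fin.val_mk]; omega),
                if_neg (by omega)]
            have pj2 : Pm N j ⟨(i:ℕ)+1, hib⟩ = 1 := by
              rw [Pm_row j _ hj, if_pos (Fin.ext (by simp only [Fin.val_mk]; omega))]
            rw [pj1, pj2]
            simp only [pow_succ]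
            ring
          · by_cases e3 : (i:ℕ) = (j:ℕ)+1
            · rw [F ((i:ℕ)+1) ((j:ℕ)+1) (by omega) (by omega) (by omega) (by omega) (by omega),
                T ((i:ℕ)+1) ((j:ℕ)+1+1) (by omega) (by omega) (by omega) (by omega) (by omega),
                F ((i:ℕ)+1+1) ((j:ℕ)+1) (by omega) (by omega) (by omega) (by omega) (by omega),
                F ((i:ℕ)+1+1) ((j:ℕ)+1+1) (by omega) (by omega) (by omega) (by omega) (by omega)]
              have pj1 : Pm N j i = -1 := by
                rw [Pm_row j i hj, if_neg (by simp only [Fin.ext_iff, Fin.val_mk]; omega), if_pos e3]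
              have pj2 : Pm N j ⟨(i:ℕ)+1, hib⟩ = 0 := by
                rw [Pm_row j _ hj, if_neg (by simp only [Fin.ext_iff, Fin.val_mk]; omega),
                  if_neg (by simp only [Fin.val_mk]; omega)]
              rw [pj1, pj2]
              simp only [pow_succ]
              ring
            · rw [F ((i:ℕ)+1) ((j:ℕ)+1) (by omega) (by omega) (by omega) (by omega) (by omega),
                F ((i:ℕ)+1) ((j:ℕ)+1+1) (by omega) (by omega) (by omega) (by omega) (by omega),
                F ((i:ℕ)+1+1) ((j:ℕ)+1) (by omega) (by omega) (by omega) (by omega) (by omega),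
                F ((i:ℕ)+1+1) ((j:ℕ)+1+1) (by omega) (by omega) (by omega) (by omega) (by omega)]
              have pj1 : Pm N j i = 0 := by
                rw [Pm_row j i hj, if_neg (by simp only [Fin.ext_iff, Fin.val_mk]; omega),
                  if_neg (by omega)]
              have pj2 : Pm N j ⟨(i:ℕ)+1, hib⟩ = 0 := by
                rw [Pm_row j _ hj, if_neg (by simp only [Fin.ext_iff, Fin.val_mk]; omega),
                  if_neg (by simp only [Fin.val_mk]; omega)]
              rw [pj1, pj2]
              ring
  rw [hM, Matrix.det_mul, Matrix.det_mul, Matrix.det_transpose, Matrix.det_diagonal]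
  have hPdet : (Pm N).det ≠ 0 := by
    have h1 : (Pm N).det * (Qm N).det = 1 := by
      rw [← Matrix.det_mul, hPQ N hN, Matrix.det_one]
    intro h
    rw [h, zero_mul] at h1
    exact zero_ne_one h1
  have hgprod : (∏ k : Fin (2*N), ((-1:ℚ))^(k:ℕ)) ≠ 0 :=
    Finset.prod_ne_zero_iff.mpr fun k _ => pow_ne_zero _ (by norm_num)
  exact mul_ne_zero (mul_ne_zero hPdet hgprod) hPdet
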